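/- Let V be a finite-dimensional real vector space carrying a reduced crystallographic root system Φ with a chosen base of simple roots α₁, …, α_r, Weyl group W, and coroots α∨ for α ∈ Φ. Call μ ∈ V dominant if ⟨α∨, μ⟩ ≥ 0 for every simple root α. If μ and λ are dominant and μ ≤ λ (i.e., λ − μ is a nonnegative real linear combination of the simple roots), then the convex hull of the orbit Wμ is contained in the convex hull of the orbit Wλ. -/

import Mathlib

open Function
set_option linter.unusedSectionVars false
set_option linter.unusedVariables false
set_option maxHeartbeats 1000000

/-- A choice of base (system of simple roots) for a root pairing: the simple roots are
linearly independent, the indexing is injective, and every root is either a nonnegative or a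
nonpositive linear combination of the simple roots. -/
def RootPairing.IsBaseOf {ι V N : Type*} [AddCommGroup V] [Module ℝ V]
    [AddCommGroup N] [Module ℝ N] {r : ℕ}
    (P : RootPairing ι ℝ V N) (b : Fin r → ι) : Prop :=
  Function.Injective b ∧
  LinearIndependent ℝ (fun i => P.root (b i)) ∧
  ∀ j : ι, (∃ c : Fin r → ℝ, (∀ i, 0 ≤ c i) ∧ P.root j = ∑ i, c i • P.root (b i)) ∨
           (∃ c : Fin r → ℝ, (∀ i, c i ≤ 0) ∧ P.root j = ∑ i, c i • P.root (b i))

section Aux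
variable {ι V N : Type*} [Fintype ι] [AddCommGroup V] [Module ℝ V]
    [AddCommGroup N] [Module ℝ N]

lemma finite_weyl (P : RootPairing ι ℝ V N) [P.IsRootSystem] :
    (Subgroup.closure (Set.range P.reflection) : Set (V ≃ₗ[ℝ] V)).Finite := by
  have hmaps : ∀ w ∈ Subgroup.closure (Set.range P.reflection), ∀ i, w (P.root i) ∈ Set.range P.root := by
    intro w hw
    induction hw using Subgroup.closure_induction'' with
    | mem x hx => obtain ⟨j, rfl⟩ := hx; intro i; exact ⟨_, P.root_reflectionPerm j i⟩
    | inv_mem x hx => obtain ⟨j, rfl⟩ := hx; intro i; rw [P.reflection_inv]; exact ⟨_, P.root_reflectionPerm j i⟩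
    | one => intro i; exact ⟨i, rfl⟩
    | mul x y _ _ hx hy => intro i; obtain ⟨k, hk⟩ := hy i; rw [LinearEquiv.mul_apply, ← hk]; exact hx k
  refine Set.Finite.of_finite_image (f := fun w : V ≃ₗ[ℝ] V => fun i => w (P.root i)) ?_ ?_
  · refine (Set.Finite.pi (t := fun _ : ι => Set.range P.root) (fun _ => Set.finite_range _)).subset ?_
    rintro _ ⟨w, hw, rfl⟩ i _
    exact hmaps w hw i
  · intro w₁ _ w₂ _ h
    have : (w₁ : V →ₗ[ℝ] V) = w₂ := by
      apply LinearMap.ext_on_range (RootPairing.IsRootSystem.span_root_eq_top (P := P))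
      intro i; exact congrFun h i
    exact LinearEquiv.toLinearMap_injective this

lemma hpol (P : RootPairing ι ℝ V N) (x y : V) :
    P.toLinearMap y (P.Polarization x) = P.RootForm x y := by
  simp [RootPairing.Polarization_apply, RootPairing.rootForm_apply_apply, mul_comm]

lemma hkey (P : RootPairing ι ℝ V N) (i : ι) (y : V) :
    2 * P.RootForm (P.root i) y =
      P.RootForm (P.root i) (P.root i) * P.toLinearMap y (P.coroot i) := by
  have h := congrArg (fun n => P.toLinearMap y n) (P.rootForm_self_smul_coroot i)
  simp only [map_smul, smul_eq_mul, map_nsmul, nsmul_eq_mul] at h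
  rw [hpol] at h
  push_cast at h
  rw [← h, mul_comm]

lemma hsym (P : RootPairing ι ℝ V N) (x y : V) :
    P.RootForm x y = P.RootForm y x := by
  simp [RootPairing.rootForm_apply_apply, mul_comm]

lemma haniso (P : RootPairing ι ℝ V N) [P.IsRootSystem] (x : V) (h : P.RootForm x x = 0) : x = 0 :=
  P.rootForm_anisotropic x (by simpa using h)

end Aux

/-- **Proposition (order), (a) ⇒ (b)**: Let `Φ` be a reduced crystallographic root system on
a finite-dimensional real vector space `V`, with base of simple roots `α₁, …, α_r`, coroots
`α∨`, and Weyl group `W`.  Call `μ` dominant when `⟨α∨, μ⟩ ≥ 0` for all simple roots `α`.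
If `μ` and `λ` are dominant and `λ - μ` is a nonnegative combination of the simple roots
(`μ ≤ λ`), then `Conv(Wμ) ⊆ Conv(Wλ)`. -/
theorem stmt_5 {ι V N : Type*} [Fintype ι] [AddCommGroup V] [Module ℝ V]
    [FiniteDimensional ℝ V] [AddCommGroup N] [Module ℝ N]
    (P : RootPairing ι ℝ V N) [P.IsRootSystem] (hcrys : P.IsCrystallographic) (hred : P.IsReduced)
    (r : ℕ) (b : Fin r → ι) (hb : P.IsBaseOf b)
    (μ lam : V)
    (hμdom : ∀ i : Fin r, 0 ≤ P.toLinearMap μ (P.coroot (b i)))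
    (hlamdom : ∀ i : Fin r, 0 ≤ P.toLinearMap lam (P.coroot (b i)))
    (hle : ∃ x : Fin r → ℝ, (∀ i, 0 ≤ x i) ∧ lam - μ = ∑ i, x i • P.root (b i)) :
    convexHull ℝ ((fun w : V ≃ₗ[ℝ] V => w μ) '' (Subgroup.closure (Set.range P.reflection) : Set (V ≃ₗ[ℝ] V))) ⊆
      convexHull ℝ ((fun w : V ≃ₗ[ℝ] V => w lam) '' (Subgroup.closure (Set.range P.reflection) : Set (V ≃ₗ[ℝ] V))) := by
  classical
  have hWfin := finite_weyl P
  set B := P.RootForm with hBdef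
  set S : Set V := (fun w : V ≃ₗ[ℝ] V => w lam) '' (Subgroup.closure (Set.range P.reflection) : Set (V ≃ₗ[ℝ] V)) with hSdef
  have hSfin : S.Finite := Set.Finite.image _ hWfin
  have hlamS : lam ∈ S := ⟨1, SetLike.mem_coe.mpr (one_mem _), rfl⟩
  have hSmem : ∀ w ∈ Subgroup.closure (Set.range P.reflection), ∀ x ∈ S, w x ∈ S := by
    rintro w hw x ⟨u, hu, rfl⟩
    exact ⟨w * u, SetLike.mem_coe.mpr (mul_mem hw (SetLike.mem_coe.mp hu)), rfl⟩
  have hCinv : ∀ w ∈ Subgroup.closure (Set.range P.reflection), ∀ x ∈ convexHull ℝ S, w x ∈ convexHull ℝ S := by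
    intro w hw x hx
    have h1 : w x ∈ (w : V →ₗ[ℝ] V) '' (convexHull ℝ S) := ⟨x, hx, rfl⟩
    rw [LinearMap.image_convexHull] at h1
    refine convexHull_mono ?_ h1
    rintro y ⟨z, hz, rfl⟩
    exact hSmem w hw z hz
  -- the finite index type
  set t : Finset V := hSfin.toFinset with htdef
  have htS : ∀ x, x ∈ t ↔ x ∈ S := fun x => hSfin.mem_toFinset
  set v : ({x // x ∈ t} → ℝ) → V := fun c => ∑ s : {x // x ∈ t}, c s • (s : V) with hvdef
  -- membership of v c
  have hvmem : ∀ c ∈ stdSimplex ℝ {x // x ∈ t}, v c ∈ convexHull ℝ S := by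
    rintro c ⟨hc0, hc1⟩
    have h := Finset.centerMass_mem_convexHull (Finset.univ : Finset {x // x ∈ t})
      (w := c) (z := fun s => (s : V)) (fun i _ => hc0 i) (by rw [hc1]; norm_num)
      (fun i _ => (htS _).mp i.2)
    rwa [Finset.centerMass_eq_of_sum_1 _ _ hc1] at h
  -- surjectivity
  have hsurj : ∀ x ∈ convexHull ℝ S, ∃ c ∈ stdSimplex ℝ {x // x ∈ t}, v c = x := by
    intro x hx
    rw [hSfin.convexHull_eq] at hx
    obtain ⟨w, hw0, hw1, hwx⟩ := hx
    refine ⟨fun s => w (s : V), ⟨fun s => hw0 _ ((htS _).mp s.2), ?_⟩, ?_⟩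
    · rw [Finset.sum_coe_sort t w]; exact hw1
    · rw [Finset.centerMass_eq_of_sum_1 _ _ hw1] at hwx
      show ∑ s : {x // x ∈ t}, w (s:V) • (s:V) = x
      rw [Finset.sum_coe_sort t (fun y => w y • y)]
      simpa using hwx
  -- the objective function
  set F : ({x // x ∈ t} → ℝ) → ℝ := fun c => B (μ - v c) (μ - v c) with hFdef
  have hFeq : ∀ c, F c = ∑ i : ι,
      (P.coroot' i μ - ∑ s : {x // x ∈ t}, c s * P.coroot' i (s : V)) *
      (P.coroot' i μ - ∑ s : {x // x ∈ t}, c s * P.coroot' i (s : V)) := by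
    intro c
    rw [hFdef]
    show P.RootForm (μ - v c) (μ - v c) = _
    rw [RootPairing.rootForm_apply_apply]
    refine Finset.sum_congr rfl fun i _ => ?_
    have : P.coroot' i (μ - v c)
        = P.coroot' i μ - ∑ s : {x // x ∈ t}, c s * P.coroot' i (s : V) := by
      simp [hvdef, map_sub, map_sum, map_smul, smul_eq_mul]
    rw [this]
  have hFcont : Continuous F := by
    rw [funext hFeq]
    refine continuous_finset_sum _ fun i _ => Continuous.mul ?_ ?_ <;>
    exact continuous_const.sub
      (continuous_finset_sum _ fun s _ => (continuous_apply s).mul continuous_const)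
  -- minimizer
  have hne : (stdSimplex ℝ {x // x ∈ t}).Nonempty := by
    refine ⟨fun s => if s = ⟨lam, (htS lam).mpr hlamS⟩ then (1:ℝ) else 0, fun s => ?_, ?_⟩
    · dsimp only; split <;> norm_num
    · simp
  obtain ⟨c₀, hc₀mem, hc₀min⟩ :=
    (isCompact_stdSimplex ℝ {x // x ∈ t}).exists_isMinOn hne hFcont.continuousOn
  set p : V := v c₀ with hpdef
  have hpC : p ∈ convexHull ℝ S := hvmem _ hc₀mem
  set f : V := μ - p with hfdef
  -- variational inequality
  have hexp : ∀ (τ : ℝ) (d : V), B (f - τ • d) (f - τ • d)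
      = B f f - 2*τ*(B f d) + τ^2 * B d d := by
    intro τ d
    have hdf : B d f = B f d := hsym P d f
    simp only [map_sub, map_smul, LinearMap.sub_apply, LinearMap.smul_apply, smul_eq_mul]
    rw [hdf]; ring
  have hvar : ∀ x ∈ convexHull ℝ S, B f (x - p) ≤ 0 := by
    intro x hx
    obtain ⟨c, hc, hvc⟩ := hsurj x hx
    have hseg : ∀ τ : ℝ, 0 ≤ τ → τ ≤ 1 → F c₀ ≤ B (f - τ • (x - p)) (f - τ • (x - p)) := by
      intro τ h0 h1
      have hcτ : (fun s => (1-τ) * c₀ s + τ * c s) ∈ stdSimplex ℝ {x // x ∈ t} := by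
        refine ⟨fun s => add_nonneg (mul_nonneg (by linarith) (hc₀mem.1 s))
          (mul_nonneg h0 (hc.1 s)), ?_⟩
        rw [Finset.sum_add_distrib, ← Finset.mul_sum, ← Finset.mul_sum, hc₀mem.2, hc.2]
        ring
      have hvτ : v (fun s => (1-τ) * c₀ s + τ * c s) = (1-τ) • p + τ • x := by
        rw [hpdef, ← hvc, hvdef]
        simp only [add_smul, mul_smul, Finset.sum_add_distrib, ← Finset.smul_sum]
      have harg : μ - ((1-τ) • p + τ • x) = f - τ • (x - p) := by
        rw [hfdef, sub_smul, one_smul, smul_sub]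
        abel
      have hmin : F c₀ ≤ F (fun s => (1-τ) * c₀ s + τ * c s) := hc₀min hcτ
      have hFτ : F (fun s => (1-τ) * c₀ s + τ * c s)
          = B (f - τ • (x - p)) (f - τ • (x - p)) := by
        show B (μ - v fun s => (1-τ) * c₀ s + τ * c s)
            (μ - v fun s => (1-τ) * c₀ s + τ * c s) = _
        rw [hvτ, harg]
      rwa [hFτ] at hmin
    have hineq : ∀ τ : ℝ, 0 < τ → τ ≤ 1 → B f (x - p) ≤ τ/2 * B (x - p) (x - p) := by
      intro τ h0 h1
      have h := hseg τ h0.le h1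
      rw [hexp] at h
      have hF0 : F c₀ = B f f := by
        rw [hFdef, hfdef, hpdef]
      rw [hF0] at h
      nlinarith
    by_contra hcon
    push_neg at hcon
    have hK : 0 ≤ B (x - p) (x - p) := P.zero_le_rootForm _
    set K := B (x - p) (x - p) with hKdef
    have hτ0 : 0 < min 1 (B f (x - p)/(K+1)) := by
      refine lt_min one_pos (div_pos hcon (by linarith))
    have hτ1 : min 1 (B f (x - p)/(K+1)) ≤ 1 := min_le_left _ _
    have h := hineq _ hτ0 hτ1
    have hτ2 : min 1 (B f (x - p)/(K+1)) ≤ B f (x - p)/(K+1) := min_le_right _ _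
    have hKK : (0:ℝ) < K + 1 := by linarith
    rw [le_div_iff₀ hKK] at hτ2
    nlinarith [h, hτ2, hτ0, hcon, hK]
  -- dominance of f
  have hdom : ∀ i : Fin r, 0 ≤ B f (P.root (b i)) := by
    intro i
    by_contra h'
    push_neg at h'
    have hαα : 0 < B (P.root (b i)) (P.root (b i)) :=
      lt_of_le_of_ne (P.zero_le_rootForm _) (fun h => P.ne_zero (b i) (haniso P _ h.symm))
    have h1 : 0 ≤ B (P.root (b i)) μ := by
      have hk := hkey P (b i) μ
      nlinarith [hμdom i]
    have h2 : 0 < B (P.root (b i)) p := by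
      have hmp : B (P.root (b i)) p = B (P.root (b i)) μ - B (P.root (b i)) f := by
        have : p = μ - f := by rw [hfdef]; abel
        rw [this, map_sub]
      have hfs : B (P.root (b i)) f = B f (P.root (b i)) := hsym P _ _
      rw [hmp, hfs]
      linarith
    have h3 : 0 < P.toLinearMap p (P.coroot (b i)) := by
      have hk := hkey P (b i) p
      nlinarith
    have hrefl : P.reflection (b i) p ∈ convexHull ℝ S :=
      hCinv _ (Subgroup.subset_closure ⟨b i, rfl⟩) p hpC
    have hv := hvar _ hrefl
    have hre : P.reflection (b i) p - p
        = -(P.toLinearMap p (P.coroot (b i))) • P.root (b i) := by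
      rw [P.reflection_apply]
      have : P.coroot' (b i) p = P.toLinearMap p (P.coroot (b i)) := by
        simp [LinearMap.flip_apply]
      rw [this, neg_smul]
      abel
    rw [hre] at hv
    rw [map_smul, smul_eq_mul] at hv
    nlinarith
  -- conclude μ ∈ convexHull S
  have hμC : μ ∈ convexHull ℝ S := by
    obtain ⟨x, hx0, hxs⟩ := hle
    have h1 : 0 ≤ B f (lam - μ) := by
      rw [hxs, map_sum]
      refine Finset.sum_nonneg fun i _ => ?_
      rw [map_smul, smul_eq_mul]
      exact mul_nonneg (hx0 i) (hdom i)
    have h2 : B f (lam - p) ≤ 0 := hvar lam (subset_convexHull ℝ S hlamS)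
    have h3 : B f f ≤ 0 := by
      have hsplit : B f f = B f (lam - p) - B f (lam - μ) := by
        have : f = (lam - p) - (lam - μ) := by rw [hfdef]; abel
        nth_rewrite 2 [this]
        rw [map_sub]
      rw [hsplit]
      linarith
    have h4 : 0 ≤ B f f := P.zero_le_rootForm f
    have h5 : f = 0 := haniso P f (le_antisymm h3 h4)
    have : μ = p := by rw [hfdef] at h5; rwa [sub_eq_zero] at h5
    rwa [this]
  refine convexHull_min ?_ (convex_convexHull ℝ S)
  rintro y ⟨u, hu, rfl⟩
  exact hCinv u (SetLike.mem_coe.mp hu) μ hμC
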